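/- For real $z > 3 + \sqrt{8}$, the Stieltjes transform of the Marčenko-Pastur density equals the closed form: $\int_a^b \frac{\rho(\lambda)}{z - \lambda}\, d\lambda = \frac{1}{2z}\left(z - 1 - \sqrt{z^2 - 6z + 1}\right)$, where $a = 3-\sqrt{8}$, $b = 3+\sqrt{8}$ and $\rho(\lambda) = \frac{\sqrt{(\lambda-a)(b-\lambda)}}{2\pi\lambda}$. -/

import Mathlib

/-- The Marčenko-Pastur type density supported on `[3-√8, 3+√8]`. -/
noncomputable def mpDensity (lam : ℝ) : ℝ :=
  Real.sqrt ((lam - (3 - Real.sqrt 8)) * ((3 + Real.sqrt 8) - lam)) / (2 * Real.pi * lam)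

set_option maxHeartbeats 1000000

theorem stmt_15 (z : ℝ) (hz : 3 + Real.sqrt 8 < z) :
    ∫ lam in (3 - Real.sqrt 8)..(3 + Real.sqrt 8), mpDensity lam / (z - lam)
      = (z - 1 - Real.sqrt (z ^ 2 - 6 * z + 1)) / (2 * z) := by
  have hs2 : Real.sqrt 8 ^ 2 = 8 := Real.sq_sqrt (by norm_num)
  set s : ℝ := Real.sqrt 8 with hs_def
  have hs0 : 0 < s := Real.sqrt_pos.mpr (by norm_num)
  have hs3 : s < 3 := by nlinarith
  have hz3 : 3 < z := by linarith
  have hzQ : 0 < z ^ 2 - 6 * z + 1 := by nlinarith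
  set Q : ℝ := Real.sqrt (z ^ 2 - 6 * z + 1) with hQ_def
  have hQ2 : Q ^ 2 = z ^ 2 - 6 * z + 1 := Real.sq_sqrt hzQ.le
  have hQ0 : 0 < Q := Real.sqrt_pos.mpr hzQ
  have hpi : (0:ℝ) < Real.pi := Real.pi_pos
  have hz0 : 0 < z := by linarith
  set F : ℝ → ℝ := fun l =>
    (z * Real.arcsin ((l - 3) / s) - Real.arcsin ((3 * l - 1) / (s * l))
      + Q * Real.arcsin (((z - 3) * (3 - l) + 8) / (s * (z - l)))) / (2 * Real.pi * z) with hF_def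
  clear_value s Q F
  have hab : (3:ℝ) - s ≤ 3 + s := by linarith
  -- continuity of the integrand on [a,b]
  have hcont_f : ContinuousOn (fun l => mpDensity l / (z - l)) (Set.uIcc (3 - s) (3 + s)) := by
    rw [Set.uIcc_of_le hab]
    simp only [mpDensity]
    rw [← hs_def]
    have h1 : ContinuousOn (fun l : ℝ => Real.sqrt ((l - (3 - s)) * ((3 + s) - l)))
        (Set.Icc (3 - s) (3 + s)) :=
      (Real.continuous_sqrt.comp (by fun_prop)).continuousOn
    have h2 : ContinuousOn (fun l : ℝ => 2 * Real.pi * l) (Set.Icc (3 - s) (3 + s)) := by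
      fun_prop
    apply ContinuousOn.div
    · exact h1.div h2 (fun x hx => by
        have := hx.1
        have hx0 : 0 < x := by linarith
        positivity)
    · fun_prop
    · intro x hx
      have := hx.2
      have : x < z := by linarith
      intro h; linarith [sub_eq_zero.mp h]
  have hint : IntervalIntegrable (fun l => mpDensity l / (z - l))
      MeasureTheory.volume (3 - s) (3 + s) := hcont_f.intervalIntegrable
  -- continuity of F on [a,b]
  have hcont_F : ContinuousOn F (Set.Icc (3 - s) (3 + s)) := by
    rw [hF_def]
    apply ContinuousOn.div _ (by fun_prop) (fun x _ => by positivity)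
    apply ContinuousOn.add
    apply ContinuousOn.sub
    · exact (continuous_const.mul (Real.continuous_arcsin.comp (by fun_prop))).continuousOn
    · apply Real.continuous_arcsin.comp_continuousOn
      apply ContinuousOn.div (by fun_prop) (by fun_prop)
      intro x hx
      have := hx.1
      have hx0 : 0 < x := by linarith
      positivity
    · apply ContinuousOn.mul continuousOn_const
      apply Real.continuous_arcsin.comp_continuousOn
      apply ContinuousOn.div (by fun_prop) (by fun_prop)
      intro x hx
      have := hx.2
      have : 0 < z - x := by linarith
      positivity
  -- derivative on the open interval
  have hderiv : ∀ l ∈ Set.Ioo (3 - s) (3 + s),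
      HasDerivAt F (mpDensity l / (z - l)) l := by
    intro l hl
    rw [hF_def]
    obtain ⟨hl1, hl2⟩ := hl
    have hl0 : 0 < l := by linarith
    have hlz : 0 < z - l := by linarith
    have hSsq : 0 < (l - (3 - s)) * ((3 + s) - l) := mul_pos (by linarith) (by linarith)
    set S : ℝ := Real.sqrt ((l - (3 - s)) * ((3 + s) - l)) with hS_def
    have hS0 : 0 < S := Real.sqrt_pos.mpr hSsq
    have hS2 : S ^ 2 = (l - (3 - s)) * ((3 + s) - l) := Real.sq_sqrt hSsq.le
    have hS2' : S ^ 2 = -(l ^ 2) + 6 * l - 1 := by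
      rw [hS2]; linear_combination hs2
    clear_value S
    have hposl : 0 < -(l ^ 2) + 6 * l - 1 := by rw [← hS2']; positivity
    -- first arcsin term
    have hg1a : (-1:ℝ) < (l - 3) / s := by
      rw [lt_div_iff₀ hs0]; linarith
    have hg1b : (l - 3) / s < 1 := by
      rw [div_lt_one hs0]; linarith
    have h1 : HasDerivAt (fun x : ℝ => Real.arcsin ((x - 3) / s)) (1 / S) l := by
      have hd : HasDerivAt (fun x : ℝ => (x - 3) / s) (1 / s) l := by
        simpa using ((hasDerivAt_id l).sub_const 3).div_const s
      have := (Real.hasDerivAt_arcsin (ne_of_gt hg1a) (ne_of_lt hg1b)).comp l hd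
      refine this.congr_deriv (Eq.symm ?_)
      have key : 1 - ((l - 3) / s) ^ 2 = (S / s) ^ 2 := by
        rw [div_pow, div_pow, hS2']
        field_simp
        first
        | linear_combination hs2
        | linear_combination -hs2
      rw [key, Real.sqrt_sq (by positivity)]
      field_simp
    -- second arcsin term
    have hsl : 0 < s * l := mul_pos hs0 hl0
    have hsl2 : (s * l) ^ 2 = 8 * l ^ 2 := by rw [mul_pow, hs2]
    have hsq2 : (3 * l - 1) ^ 2 < (s * l) ^ 2 := by rw [hsl2]; nlinarith [hposl]
    have habs2 := abs_lt.mp (abs_lt_of_sq_lt_sq hsq2 hsl.le)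
    have hg2a : (-1:ℝ) < (3 * l - 1) / (s * l) := by
      rw [lt_div_iff₀ hsl]; linarith [habs2.1]
    have hg2b : (3 * l - 1) / (s * l) < 1 := by
      rw [div_lt_one hsl]; linarith [habs2.2]
    have h2 : HasDerivAt (fun x : ℝ => Real.arcsin ((3 * x - 1) / (s * x))) (1 / (l * S)) l := by
      have hd : HasDerivAt (fun x : ℝ => (3 * x - 1) / (s * x))
          ((3 * (s * l) - (3 * l - 1) * s) / (s * l) ^ 2) l := by
        have := (((hasDerivAt_id l).const_mul 3).sub_const 1).div
          ((hasDerivAt_id l).const_mul s) (show s * id l ≠ 0 by simp only [id_eq]; positivity)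
        simpa [Pi.div_def] using this
      have := (Real.hasDerivAt_arcsin (ne_of_gt hg2a) (ne_of_lt hg2b)).comp l hd
      refine this.congr_deriv (Eq.symm ?_)
      have key : 1 - ((3 * l - 1) / (s * l)) ^ 2 = (S / (s * l)) ^ 2 := by
        rw [div_pow, div_pow, hS2']
        field_simp
        first
        | linear_combination (l ^ 2) * hs2
        | linear_combination (-(l ^ 2)) * hs2
      rw [key, Real.sqrt_sq (by positivity)]
      field_simp
      ring
    -- third arcsin term
    have hszl : 0 < s * (z - l) := mul_pos hs0 hlz
    have hszl2 : (s * (z - l)) ^ 2 = 8 * (z - l) ^ 2 := by rw [mul_pow, hs2]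
    have hsq3 : ((z - 3) * (3 - l) + 8) ^ 2 < (s * (z - l)) ^ 2 := by
      rw [hszl2]; nlinarith [mul_pos hzQ hposl]
    have habs3 := abs_lt.mp (abs_lt_of_sq_lt_sq hsq3 hszl.le)
    have hg3a : (-1:ℝ) < ((z - 3) * (3 - l) + 8) / (s * (z - l)) := by
      rw [lt_div_iff₀ hszl]; linarith [habs3.1]
    have hg3b : ((z - 3) * (3 - l) + 8) / (s * (z - l)) < 1 := by
      rw [div_lt_one hszl]; linarith [habs3.2]
    have h3 : HasDerivAt (fun x : ℝ => Real.arcsin (((z - 3) * (3 - x) + 8) / (s * (z - x))))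
        (-Q / ((z - l) * S)) l := by
      have hd : HasDerivAt (fun x : ℝ => ((z - 3) * (3 - x) + 8) / (s * (z - x)))
          ((-(z - 3) * (s * (z - l)) - ((z - 3) * (3 - l) + 8) * (s * (-1)))
            / (s * (z - l)) ^ 2) l := by
        apply HasDerivAt.div
        · simpa using (((hasDerivAt_id l).const_sub 3).const_mul (z - 3)).add_const 8
        · simpa using ((hasDerivAt_id l).const_sub z).const_mul s
        · positivity
      have := (Real.hasDerivAt_arcsin (ne_of_gt hg3a) (ne_of_lt hg3b)).comp l hd
      refine this.congr_deriv (Eq.symm ?_)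
      have key : 1 - (((z - 3) * (3 - l) + 8) / (s * (z - l))) ^ 2
          = (Q * S / (s * (z - l))) ^ 2 := by
        rw [div_pow, div_pow, mul_pow Q S, hQ2, hS2']
        field_simp
        first
        | linear_combination ((z - l) ^ 2) * hs2
        | linear_combination (-((z - l) ^ 2)) * hs2
      have hnum : (-(z - 3) * (s * (z - l)) - ((z - 3) * (3 - l) + 8) * (s * (-1)))
          = -Q ^ 2 * s := by rw [hQ2]; ring
      rw [key, Real.sqrt_sq (by positivity), hnum, one_div_div]
      field_simp
    -- assemble
    have hDF : HasDerivAt (fun l =>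
        (z * Real.arcsin ((l - 3) / s) - Real.arcsin ((3 * l - 1) / (s * l))
          + Q * Real.arcsin (((z - 3) * (3 - l) + 8) / (s * (z - l)))) / (2 * Real.pi * z))
        ((z * (1 / S) - 1 / (l * S) + Q * (-Q / ((z - l) * S))) / (2 * Real.pi * z)) l :=
      (((h1.const_mul z).sub h2).add (h3.const_mul Q)).div_const (2 * Real.pi * z)
    have hR : z * (1 / S) - 1 / (l * S) + Q * (-Q / ((z - l) * S))
        = z * S / (l * (z - l)) := by
      field_simp
      linear_combination (-l) * hQ2 + (-z) * hS2'
    convert hDF using 1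
    unfold mpDensity
    rw [← hs_def, ← hS_def, hR]
    field_simp
  have key := intervalIntegral.integral_eq_sub_of_hasDerivAt_of_le hab hcont_F hderiv hint
  rw [key]
  -- evaluate F at the endpoints
  have ha0 : (0:ℝ) < 3 - s := by linarith
  have hFa : F (3 - s) = (-(z * (Real.pi / 2)) + Real.pi / 2 + Q * (Real.pi / 2))
      / (2 * Real.pi * z) := by
    simp only [hF_def]
    have e1 : ((3 - s) - 3) / s = -1 := by field_simp; ring
    have e2 : (3 * (3 - s) - 1) / (s * (3 - s)) = -1 := by
      rw [div_eq_iff (ne_of_gt (mul_pos hs0 (by linarith : (0:ℝ) < 3 - s)))]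
      first | linear_combination hs2 | linear_combination -hs2
    have e3 : ((z - 3) * (3 - (3 - s)) + 8) / (s * (z - (3 - s))) = 1 := by
      rw [div_eq_one_iff_eq (ne_of_gt (mul_pos hs0 (by linarith : (0:ℝ) < z - (3 - s))))]
      first | linear_combination hs2 | linear_combination -hs2
    rw [e1, e2, e3, Real.arcsin_neg_one, Real.arcsin_one]
    ring
  have hFb : F (3 + s) = (z * (Real.pi / 2) - Real.pi / 2 - Q * (Real.pi / 2))
      / (2 * Real.pi * z) := by
    simp only [hF_def]
    have e1 : ((3 + s) - 3) / s = 1 := by field_simp; ring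
    have e2 : (3 * (3 + s) - 1) / (s * (3 + s)) = 1 := by
      rw [div_eq_one_iff_eq (by positivity)]
      first | linear_combination hs2 | linear_combination -hs2
    have e3 : ((z - 3) * (3 - (3 + s)) + 8) / (s * (z - (3 + s))) = -1 := by
      rw [div_eq_iff (ne_of_gt (mul_pos hs0 (by linarith : (0:ℝ) < z - (3 + s))))]
      first | linear_combination hs2 | linear_combination -hs2
    rw [e1, e2, e3, Real.arcsin_one, Real.arcsin_neg_one]
    ring
  rw [hFa, hFb]
  field_simp
  ring
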